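/- Let G be a connected graph on vertex set {1,...,n} with n ≥ 2, and let Φ = (F_1,...,F_n) be pairwise disjoint graphs. If I is a minimum total dominating set of some G-layer of G[Φ], then I is a minimum total dominating set of G[Φ]; in particular, γ_t(G) = γ_t(G[Φ]). -/

import Mathlib

open scoped Classical

/-- A dominating set: every vertex is in `D` or adjacent to a vertex of `D`. -/
def isDominatingSet {V : Type*} (H : SimpleGraph V) (D : Finset V) : Prop :=
  ∀ v : V, v ∈ D ∨ ∃ u ∈ D, H.Adj u v

/-- A total dominating set: every vertex has a neighbor in `D`. -/
def isTotalDominatingSet {V : Type*} (H : SimpleGraph V) (D : Finset V) : Prop :=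
  ∀ v : V, ∃ u ∈ D, H.Adj u v

def isMinimalDominatingSet {V : Type*} (H : SimpleGraph V) (D : Finset V) : Prop :=
  isDominatingSet H D ∧ ∀ D' : Finset V, D' ⊂ D → ¬ isDominatingSet H D'

def isMinimalTotalDominatingSet {V : Type*} (H : SimpleGraph V) (D : Finset V) : Prop :=
  isTotalDominatingSet H D ∧ ∀ D' : Finset V, D' ⊂ D → ¬ isTotalDominatingSet H D'

noncomputable def domNum {V : Type*} (H : SimpleGraph V) : ℕ :=
  sInf {k | ∃ D : Finset V, isDominatingSet H D ∧ D.card = k}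

noncomputable def totalDomNum {V : Type*} (H : SimpleGraph V) : ℕ :=
  sInf {k | ∃ D : Finset V, isTotalDominatingSet H D ∧ D.card = k}

noncomputable def upperDomNum {V : Type*} (H : SimpleGraph V) : ℕ :=
  sSup {k | ∃ D : Finset V, isMinimalDominatingSet H D ∧ D.card = k}

noncomputable def upperTotalDomNum {V : Type*} (H : SimpleGraph V) : ℕ :=
  sSup {k | ∃ D : Finset V, isMinimalTotalDominatingSet H D ∧ D.card = k}

/-- Well (γ-)dominated: all minimal dominating sets have the same size. -/
def WellDominated {V : Type*} (H : SimpleGraph V) : Prop :=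
  ∀ D₁ D₂ : Finset V, isMinimalDominatingSet H D₁ → isMinimalDominatingSet H D₂ →
    D₁.card = D₂.card

/-- Well γ_t-dominated: all minimal total dominating sets have the same size. -/
def WellTotalDominated {V : Type*} (H : SimpleGraph V) : Prop :=
  ∀ D₁ D₂ : Finset V, isMinimalTotalDominatingSet H D₁ → isMinimalTotalDominatingSet H D₂ →
    D₁.card = D₂.card

/-- Restrained dominating set: dominating and every vertex outside `D` has a
neighbor outside `D`. -/
def isRestrainedDominatingSet {V : Type*} (H : SimpleGraph V) (D : Finset V) : Prop :=
  isDominatingSet H D ∧ ∀ v ∉ D, ∃ u ∉ D, H.Adj u v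

/-- Outer-connected dominating set: dominating and the subgraph induced by the
complement of `D` is connected. -/
def isOuterConnectedDominatingSet {V : Type*} (H : SimpleGraph V) (D : Finset V) : Prop :=
  isDominatingSet H D ∧ (H.induce ((↑D : Set V)ᶜ)).Connected

def isTotalRestrainedDominatingSet {V : Type*} (H : SimpleGraph V) (D : Finset V) : Prop :=
  isTotalDominatingSet H D ∧ ∀ v ∉ D, ∃ u ∉ D, H.Adj u v

def isTotalOuterConnectedDominatingSet {V : Type*} (H : SimpleGraph V) (D : Finset V) : Prop :=
  isTotalDominatingSet H D ∧ (H.induce ((↑D : Set V)ᶜ)).Connected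

noncomputable def restrainedDomNum {V : Type*} (H : SimpleGraph V) : ℕ :=
  sInf {k | ∃ D : Finset V, isRestrainedDominatingSet H D ∧ D.card = k}

noncomputable def ocDomNum {V : Type*} (H : SimpleGraph V) : ℕ :=
  sInf {k | ∃ D : Finset V, isOuterConnectedDominatingSet H D ∧ D.card = k}

noncomputable def totalRestrainedDomNum {V : Type*} (H : SimpleGraph V) : ℕ :=
  sInf {k | ∃ D : Finset V, isTotalRestrainedDominatingSet H D ∧ D.card = k}

noncomputable def totalOcDomNum {V : Type*} (H : SimpleGraph V) : ℕ :=
  sInf {k | ∃ D : Finset V, isTotalOuterConnectedDominatingSet H D ∧ D.card = k}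

/-- Paired dominating set: dominating and the induced subgraph on `D` has a
perfect matching. -/
def isPairedDominatingSet {V : Type*} (H : SimpleGraph V) (D : Finset V) : Prop :=
  isDominatingSet H D ∧
    ∃ M : SimpleGraph.Subgraph (H.induce (↑D : Set V)), M.IsPerfectMatching

noncomputable def pairedDomNum {V : Type*} (H : SimpleGraph V) : ℕ :=
  sInf {k | ∃ D : Finset V, isPairedDominatingSet H D ∧ D.card = k}

def isIndependentSet {V : Type*} (H : SimpleGraph V) (D : Finset V) : Prop :=
  ∀ u ∈ D, ∀ v ∈ D, ¬ H.Adj u v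

def isMaximalIndependentSet {V : Type*} (H : SimpleGraph V) (D : Finset V) : Prop :=
  isIndependentSet H D ∧ ∀ D' : Finset V, D ⊂ D' → ¬ isIndependentSet H D'

/-- The independent domination number `i(H)`. -/
noncomputable def indepDomNum {V : Type*} (H : SimpleGraph V) : ℕ :=
  sInf {k | ∃ D : Finset V, isMaximalIndependentSet H D ∧ D.card = k}

/-- The independence number `β₀(H)`. -/
noncomputable def indepNum {V : Type*} (H : SimpleGraph V) : ℕ :=
  sSup {k | ∃ D : Finset V, isIndependentSet H D ∧ D.card = k}

/-- An efficient dominating set: every vertex is dominated by exactly one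
member of `D`. -/
def isEfficientDominatingSet {V : Type*} (H : SimpleGraph V) (D : Finset V) : Prop :=
  ∀ v : V, ∃! u : V, u ∈ D ∧ (u = v ∨ H.Adj u v)

/-- The generalized lexicographic product `G[Φ]` of a graph `G` on `Fin n` and a
family `Φ = (F 0, …, F (n-1))` of pairwise disjoint graphs: the `F i` are induced
subgraphs, and vertices in distinct `F i`, `F j` are adjacent iff `i j ∈ E(G)`. -/
def GLP {n : ℕ} (G : SimpleGraph (Fin n)) {V : Fin n → Type*}
    (F : ∀ i, SimpleGraph (V i)) : SimpleGraph (Σ i, V i) where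
  Adj x y := (x.1 ≠ y.1 ∧ G.Adj x.1 y.1) ∨ ∃ h : x.1 = y.1, (F y.1).Adj (h ▸ x.2) y.2
  symm := ⟨by
    rintro ⟨i, a⟩ ⟨j, b⟩ (⟨hne, hadj⟩ | ⟨h, hadj⟩)
    · exact Or.inl ⟨fun hh => hne hh.symm, hadj.symm⟩
    · dsimp only at h
      subst h
      exact Or.inr ⟨rfl, hadj.symm⟩⟩
  loopless := ⟨by
    rintro ⟨i, a⟩ (⟨hne, _⟩ | ⟨h, hadj⟩)
    · exact hne rfl
    · exact (F i).irrefl hadj⟩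

/-- The number of vertices of `D ∩ V(F i)`. -/
noncomputable def layerCount {n : ℕ} {V : Fin n → Type*} [∀ i, Fintype (V i)]
    (D : Finset (Σ i, V i)) (i : Fin n) : ℕ :=
  (D.filter (fun x => x.1 = i)).card


section AuxTD

lemma tds_image_iso {A B : Type*} {H : SimpleGraph A} {H' : SimpleGraph B}
    (e : H ≃g H') {D : Finset A} (h : isTotalDominatingSet H D) :
    isTotalDominatingSet H' (D.image e) := by
  intro v
  obtain ⟨w, hw, hadj⟩ := h (e.symm v)
  refine ⟨e w, Finset.mem_image_of_mem _ hw, ?_⟩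
  have := e.map_rel_iff.mpr hadj
  simpa using this

lemma totalDomNum_iso {A B : Type*} {H : SimpleGraph A} {H' : SimpleGraph B}
    (e : H ≃g H') : totalDomNum H = totalDomNum H' := by
  unfold totalDomNum
  congr 1
  ext k
  constructor
  · rintro ⟨D, hD, rfl⟩
    exact ⟨D.image e, tds_image_iso e hD,
      Finset.card_image_of_injective _ (RelIso.injective e)⟩
  · rintro ⟨D, hD, rfl⟩
    exact ⟨D.image e.symm, tds_image_iso e.symm hD,
      Finset.card_image_of_injective _ (RelIso.injective e.symm)⟩

/-- The `G`-layer through `u` induces a copy of `G` in `G[Φ]`. -/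
def layerIso {n : ℕ} (G : SimpleGraph (Fin n)) {V : Fin n → Type*}
    (F : ∀ i, SimpleGraph (V i)) (u : ∀ i, V i) :
    G ≃g (GLP G F).induce (Set.range fun i => (⟨i, u i⟩ : Σ i, V i)) where
  toFun i := ⟨⟨i, u i⟩, ⟨i, rfl⟩⟩
  invFun x := x.1.1
  left_inv i := rfl
  right_inv := by rintro ⟨x, i, rfl⟩; rfl
  map_rel_iff' := by
    intro i j
    show (GLP G F).Adj ⟨i, u i⟩ ⟨j, u j⟩ ↔ G.Adj i j
    constructor
    · rintro (⟨hne, h⟩ | ⟨h, hF⟩)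
      · exact h
      · exfalso
        dsimp only at h
        subst h
        exact (F i).loopless.irrefl _ hF
    · intro h
      exact Or.inl ⟨fun hh => (G.ne_of_adj h) hh, h⟩

end AuxTD

/-- If `I` is a minimum total dominating set of (the subgraph induced by) some
`G`-layer of `G[Φ]`, then `I` is a minimum total dominating set of `G[Φ]`;
in particular `γ_t(G) = γ_t(G[Φ])`. -/
theorem stmt_0 {n : ℕ} (hn : 2 ≤ n) (G : SimpleGraph (Fin n)) (hG : G.Connected)
    (V : Fin n → Type) [∀ i, Fintype (V i)] (F : ∀ i, SimpleGraph (V i))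
    (u : ∀ i, V i)
    (I : Finset ↥(Set.range fun i => (⟨i, u i⟩ : Σ i, V i)))
    (hI : isTotalDominatingSet
        ((GLP G F).induce (Set.range fun i => (⟨i, u i⟩ : Σ i, V i))) I)
    (hImin : I.card = totalDomNum
        ((GLP G F).induce (Set.range fun i => (⟨i, u i⟩ : Σ i, V i)))) :
    (isTotalDominatingSet (GLP G F) (I.image Subtype.val) ∧
      (I.image Subtype.val).card = totalDomNum (GLP G F)) ∧
    totalDomNum G = totalDomNum (GLP G F) := by
  classical
  let e := layerIso G F u
  have hiso : totalDomNum G =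
      totalDomNum ((GLP G F).induce (Set.range fun i => (⟨i, u i⟩ : Σ i, V i))) :=
    totalDomNum_iso e
  -- the image of `I` totally dominates `G[Φ]`
  have hTDS : isTotalDominatingSet (GLP G F) (I.image Subtype.val) := by
    rintro ⟨j, y⟩
    obtain ⟨w, hw, hadj⟩ := hI (e j)
    obtain ⟨i, hi⟩ := w.2
    have hadj' : (GLP G F).Adj w.1 ⟨j, u j⟩ := hadj
    rw [← hi] at hadj'
    rcases hadj' with ⟨hne, hGij⟩ | ⟨h, hF⟩
    · refine ⟨w.1, Finset.mem_image_of_mem _ hw, ?_⟩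
      rw [← hi]
      exact Or.inl ⟨hne, hGij⟩
    · exfalso
      dsimp only at h
      subst h
      exact (F i).loopless.irrefl _ hF
  have hIcard : (I.image Subtype.val).card = I.card :=
    Finset.card_image_of_injective _ Subtype.val_injective
  have h1 : totalDomNum (GLP G F) ≤ (I.image Subtype.val).card :=
    Nat.sInf_le ⟨_, hTDS, rfl⟩
  -- take a minimum total dominating set `D` of `G[Φ]`
  have hne' : {k | ∃ D : Finset (Σ i, V i),
      isTotalDominatingSet (GLP G F) D ∧ D.card = k}.Nonempty :=
    ⟨_, _, hTDS, rfl⟩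
  obtain ⟨D, hD, hDcard⟩ := Nat.sInf_mem hne'
  -- every vertex of `G` has a neighbour
  have hadjex : ∀ j : Fin n, ∃ k, G.Adj j k := by
    intro j
    have : Nontrivial (Fin n) := Fin.nontrivial_iff_two_le.mpr hn
    obtain ⟨k, hk⟩ := exists_ne j
    obtain ⟨w⟩ := hG.preconnected j k
    cases w with
    | nil => exact absurd rfl hk
    | cons h _ => exact ⟨_, h⟩
  choose nbr hnbr using hadjex
  set P := D.image Sigma.fst with hP
  set Bad := Finset.univ.filter (fun j : Fin n => ¬ ∃ i ∈ P, G.Adj i j) with hBad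
  have within : ∀ j, j ∈ Bad → ∀ y : V j,
      ∃ x : V j, (⟨j, x⟩ : Σ i, V i) ∈ D ∧ (F j).Adj x y := by
    intro j hj y
    have hj2 : ¬ ∃ i ∈ P, G.Adj i j := (Finset.mem_filter.mp hj).2
    obtain ⟨w, hw, hadj⟩ := hD ⟨j, y⟩
    obtain ⟨i, z⟩ := w
    rcases hadj with ⟨hne, hGij⟩ | ⟨h, hF⟩
    · exact absurd ⟨i, Finset.mem_image_of_mem _ hw, hGij⟩ hj2
    · dsimp only at h
      subst h
      exact ⟨z, hw, hF⟩
  have badP : Bad ⊆ P := by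
    intro j hj
    obtain ⟨x, hx, -⟩ := within j hj (u j)
    exact Finset.mem_image_of_mem _ hx
  have fiber2 : ∀ j ∈ Bad, 2 ≤ (D.filter (fun x => x.1 = j)).card := by
    intro j hj
    obtain ⟨x, hx, hxadj⟩ := within j hj (u j)
    obtain ⟨x', hx', hx'adj⟩ := within j hj x
    have hnexx : x' ≠ x := fun hxx => (F j).loopless.irrefl x (hxx ▸ hx'adj)
    have : 1 < (D.filter (fun x => x.1 = j)).card := by
      refine Finset.one_lt_card.mpr ⟨⟨j, x⟩, ?_, ⟨j, x'⟩, ?_, ?_⟩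
      · exact Finset.mem_filter.mpr ⟨hx, rfl⟩
      · exact Finset.mem_filter.mpr ⟨hx', rfl⟩
      · intro hh
        have : x = x' := by
          have := (Sigma.mk.inj_iff.mp hh).2
          exact eq_of_heq this
        exact hnexx this.symm
    omega
  have cardle : P.card + Bad.card ≤ D.card := by
    have hfib : D.card = ∑ i ∈ P, (D.filter (fun x => x.1 = i)).card :=
      Finset.card_eq_sum_card_fiberwise (fun x hx => Finset.mem_image_of_mem _ hx)
    have hge : ∑ i ∈ P, (if i ∈ Bad then 2 else 1) ≤
        ∑ i ∈ P, (D.filter (fun x => x.1 = i)).card := by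
      refine Finset.sum_le_sum ?_
      intro i hi
      by_cases hib : i ∈ Bad
      · simpa [hib] using fiber2 i hib
      · simp only [hib, if_false]
        obtain ⟨x, hx, hxi⟩ := Finset.mem_image.mp hi
        exact Finset.card_pos.mpr ⟨x, Finset.mem_filter.mpr ⟨hx, hxi⟩⟩
    have hsum : ∑ i ∈ P, (if i ∈ Bad then (2:ℕ) else 1) = P.card + Bad.card := by
      have hsplit : ∀ i ∈ P, (if i ∈ Bad then (2:ℕ) else 1)
          = 1 + (if i ∈ Bad then (1:ℕ) else 0) := by
        intro i _
        split <;> rfl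
      rw [Finset.sum_congr rfl hsplit, Finset.sum_add_distrib, Finset.sum_const,
        smul_eq_mul, mul_one]
      congr 1
      rw [Finset.sum_ite_mem, Finset.inter_eq_right.mpr badP, Finset.sum_const,
        smul_eq_mul, mul_one]
    omega
  -- build a total dominating set of `G`
  have hSTDS : isTotalDominatingSet G (P ∪ Bad.image nbr) := by
    intro v
    by_cases hv : ∃ i ∈ P, G.Adj i v
    · obtain ⟨i, hi, hiv⟩ := hv
      exact ⟨i, Finset.mem_union_left _ hi, hiv⟩
    · have hvB : v ∈ Bad := Finset.mem_filter.mpr ⟨Finset.mem_univ _, hv⟩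
      exact ⟨nbr v, Finset.mem_union_right _ (Finset.mem_image_of_mem _ hvB),
        (hnbr v).symm⟩
  have hScard : (P ∪ Bad.image nbr).card ≤ D.card := by
    have h3 := Finset.card_union_le P (Bad.image nbr)
    have h4 := Finset.card_image_le (s := Bad) (f := nbr)
    omega
  have h2 : totalDomNum G ≤ totalDomNum (GLP G F) := by
    calc totalDomNum G ≤ (P ∪ Bad.image nbr).card := Nat.sInf_le ⟨_, hSTDS, rfl⟩
      _ ≤ D.card := hScard
      _ = totalDomNum (GLP G F) := hDcard
  have heq : totalDomNum G = totalDomNum (GLP G F) := by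
    refine le_antisymm h2 ?_
    calc totalDomNum (GLP G F) ≤ (I.image Subtype.val).card := h1
      _ = I.card := hIcard
      _ = totalDomNum ((GLP G F).induce (Set.range fun i => (⟨i, u i⟩ : Σ i, V i))) :=
        hImin
      _ = totalDomNum G := hiso.symm
  refine ⟨⟨hTDS, ?_⟩, heq⟩
  rw [hIcard, hImin, ← hiso, heq]
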